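/- Fix α ≥ 0, β > 0, b ∈ (0,∞]. For L' > L ≥ 0 with L + α > 0, the fixed-point map H^FP is monotone in L: if u ∈ H^FP_{α,β,L,b}(g) then u ∈ H^FP_{α,β,L',b}(g). Key ingredient: with s(L) := β/(L+α), the map L ↦ (L+α)√(2s(L)) = √(2β(L+α)) is monotonically increasing, and L ↦ (L+α)(b/2 + s(L)/b) - L·b = -bL/2 + αb/2 + β/b is monotonically decreasing. -/

import Mathlib

open scoped ENNReal

/-- The fixed-point map `H^FP_{α,β,L,b}` characterizing `L`-stationary points.
For `b = ∞` the boundary cases `u = ±b` are void and `√(2s) ≤ b` always holds. -/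
noncomputable def HFP (α β L : ℝ) (b : ℝ≥0∞) (g u : ℝ) : Prop :=
  let s : ℝ := β / (L + α)
  if b = ⊤ then
    (u = 0 ∧ |g| ≤ (L + α) * Real.sqrt (2 * s)) ∨
    (0 < α ∧ α * u = -g ∧ α * Real.sqrt (2 * s) ≤ |g|) ∨
    (α = 0 ∧ g = 0 ∧ Real.sqrt (2 * s) ≤ u)
  else
    let B : ℝ := b.toReal
    if Real.sqrt (2 * s) ≤ B then
      (u = -B ∧ α * B ≤ g) ∨
      (u = B ∧ g ≤ -(α * B)) ∨
      (u = 0 ∧ |g| ≤ (L + α) * Real.sqrt (2 * s)) ∨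
      (0 < α ∧ α * u = -g ∧ α * Real.sqrt (2 * s) ≤ |g| ∧ |g| ≤ α * B) ∨
      (α = 0 ∧ g = 0 ∧ Real.sqrt (2 * s) ≤ u ∧ u ≤ B)
    else
      (u = -B ∧ (L + α) * (B / 2 + s / B) - L * B ≤ g) ∨
      (u = B ∧ g ≤ -((L + α) * (B / 2 + s / B) - L * B)) ∨
      (u = 0 ∧ |g| ≤ (L + α) * (B / 2 + s / B)) ∨
      (0 < α ∧ α * u = -g ∧ α * Real.sqrt (2 * s) ≤ |g| ∧ |g| ≤ α * B) ∨
      (α = 0 ∧ g = 0 ∧ Real.sqrt (2 * s) ≤ u ∧ u ≤ B)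

private lemma key_eq (β c : ℝ) (hβ : 0 ≤ β) (hc : 0 < c) :
    c * Real.sqrt (2 * (β / c)) = Real.sqrt (2 * β * c) := by
  rw [show (2:ℝ) * β * c = (2 * (β / c)) * c ^ 2 by field_simp,
      Real.sqrt_mul (by positivity : (0:ℝ) ≤ 2 * (β / c)) (c ^ 2), Real.sqrt_sq hc.le]
  ring

/-- Monotonicity of the fixed-point map in `L`: if `u ∈ H^FP_{α,β,L,b}(g)` and `L' > L`,
then `u ∈ H^FP_{α,β,L',b}(g)`. The key ingredients are that `L ↦ (L+α)√(2s(L)) = √(2β(L+α))`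
is monotonically increasing and `L ↦ (L+α)(b/2 + s(L)/b) - Lb = -bL/2 + αb/2 + β/b`
is monotonically decreasing. -/
theorem HFP_monotone_in_L (α β : ℝ) (hα : 0 ≤ α) (hβ : 0 < β)
    (b : ℝ≥0∞) (hb : 0 < b) (L L' : ℝ) (hL : 0 ≤ L) (hLL' : L < L')
    (hLα : 0 < L + α) (g u : ℝ) (h : HFP α β L b g u) :
    HFP α β L' b g u ∧
    MonotoneOn (fun t : ℝ => Real.sqrt (2 * β * (t + α))) (Set.Ici 0) ∧
    (∀ B : ℝ, 0 < B →
      AntitoneOn (fun t : ℝ => -B * t / 2 + α * B / 2 + β / B) (Set.Ici 0)) := by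
  have hL'α : 0 < L' + α := by linarith
  have hmono : MonotoneOn (fun t : ℝ => Real.sqrt (2 * β * (t + α))) (Set.Ici 0) := by
    intro x _ y _ hxy
    exact Real.sqrt_le_sqrt (by nlinarith)
  have hanti : ∀ B : ℝ, 0 < B →
      AntitoneOn (fun t : ℝ => -B * t / 2 + α * B / 2 + β / B) (Set.Ici 0) := by
    intro B hB x _ y _ hxy
    simp only
    nlinarith
  refine ⟨?_, hmono, hanti⟩
  have hs' : β / (L' + α) ≤ β / (L + α) := by
    apply div_le_div_of_nonneg_left hβ.le hLα (by linarith)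
  have hsq : Real.sqrt (2 * (β / (L' + α))) ≤ Real.sqrt (2 * (β / (L + α))) :=
    Real.sqrt_le_sqrt (by linarith)
  have hinc : (L + α) * Real.sqrt (2 * (β / (L + α))) ≤
      (L' + α) * Real.sqrt (2 * (β / (L' + α))) := by
    rw [key_eq β _ hβ.le hLα, key_eq β _ hβ.le hL'α]
    exact Real.sqrt_le_sqrt (by nlinarith)
  simp only [HFP] at h ⊢
  by_cases hbt : b = ⊤
  · rw [if_pos hbt] at h ⊢
    rcases h with ⟨hu, hg⟩ | ⟨hα0, hgu, hg⟩ | ⟨hα0, hg, hu⟩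
    · exact Or.inl ⟨hu, hg.trans hinc⟩
    · exact Or.inr (Or.inl ⟨hα0, hgu,
        le_trans (mul_le_mul_of_nonneg_left hsq hα) hg⟩)
    · exact Or.inr (Or.inr ⟨hα0, hg, le_trans hsq hu⟩)
  · rw [if_neg hbt] at h ⊢
    set B := b.toReal with hBdef
    have hBpos : 0 < B := ENNReal.toReal_pos hb.ne' hbt
    have hexp : ∀ M : ℝ, 0 < M + α →
        (M + α) * (B / 2 + (β / (M + α)) / B) = (M + α) * B / 2 + β / B := by
      intro M hM
      field_simp
    by_cases h1 : Real.sqrt (2 * (β / (L + α))) ≤ B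
    · rw [if_pos h1] at h
      rw [if_pos (hsq.trans h1)]
      rcases h with ⟨hu, hg⟩ | ⟨hu, hg⟩ | ⟨hu, hg⟩ | ⟨hα0, hgu, hg1, hg2⟩ | ⟨hα0, hg, hu1, hu2⟩
      · exact Or.inl ⟨hu, hg⟩
      · exact Or.inr (Or.inl ⟨hu, hg⟩)
      · exact Or.inr (Or.inr (Or.inl ⟨hu, hg.trans hinc⟩))
      · exact Or.inr (Or.inr (Or.inr (Or.inl ⟨hα0, hgu,
          le_trans (mul_le_mul_of_nonneg_left hsq hα) hg1, hg2⟩)))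
      · exact Or.inr (Or.inr (Or.inr (Or.inr ⟨hα0, hg, le_trans hsq hu1, hu2⟩)))
    · rw [if_neg h1] at h
      push_neg at h1
      -- B² < 2β/(L+α), i.e. (L+α)B² < 2β
      have hB2 : (L + α) * B ^ 2 < 2 * β := by
        have h2s : 0 ≤ 2 * (β / (L + α)) := by positivity
        have : B ^ 2 < 2 * (β / (L + α)) := by
          nlinarith [Real.sq_sqrt h2s, hBpos.le]
        have heq : (L + α) * (2 * (β / (L + α))) = 2 * β := by
          field_simp
        nlinarith
      have hβB : β / B * B = β := div_mul_cancel₀ β hBpos.ne'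
      by_cases h2 : Real.sqrt (2 * (β / (L' + α))) ≤ B
      · rw [if_pos h2]
        -- threshold for L' in the small branch
        set r := (L' + α) * Real.sqrt (2 * (β / (L' + α))) with hrdef
        have hrpos : 0 < r := by
          have : 0 < Real.sqrt (2 * (β / (L' + α))) :=
            Real.sqrt_pos.mpr (by positivity)
          positivity
        have hr2 : r ^ 2 = 2 * β * (L' + α) := by
          rw [hrdef, key_eq β _ hβ.le hL'α]
          exact Real.sq_sqrt (by positivity)
        have hrB : r ≤ B * (L' + α) := by
          rw [hrdef]
          nlinarith [mul_le_mul_of_nonneg_left h2 hL'α.le]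
        have h2β : 2 * β ≤ r * B := by
          nlinarith [mul_le_mul_of_nonneg_left hrB hrpos.le]
        have hthr : (L + α) * B / 2 + β / B ≤ r := by
          nlinarith
        have hαB : α * B ≤ (L + α) * (B / 2 + (β / (L + α)) / B) - L * B := by
          rw [hexp L hLα]
          nlinarith
        rcases h with ⟨hu, hg⟩ | ⟨hu, hg⟩ | ⟨hu, hg⟩ | ⟨hα0, hgu, hg1, hg2⟩ | ⟨hα0, hg, hu1, hu2⟩
        · exact Or.inl ⟨hu, le_trans hαB hg⟩
        · exact Or.inr (Or.inl ⟨hu, hg.trans (by linarith)⟩)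
        · refine Or.inr (Or.inr (Or.inl ⟨hu, ?_⟩))
          rw [hexp L hLα] at hg
          exact hg.trans hthr
        · exact Or.inr (Or.inr (Or.inr (Or.inl ⟨hα0, hgu,
            le_trans (mul_le_mul_of_nonneg_left hsq hα) hg1, hg2⟩)))
        · exact Or.inr (Or.inr (Or.inr (Or.inr ⟨hα0, hg, le_trans hsq hu1, hu2⟩)))
      · rw [if_neg h2]
        have hthr : (L' + α) * (B / 2 + (β / (L' + α)) / B) - L' * B ≤
            (L + α) * (B / 2 + (β / (L + α)) / B) - L * B := by
          rw [hexp L hLα, hexp L' hL'α]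
          nlinarith
        have hthr0 : (L + α) * (B / 2 + (β / (L + α)) / B) ≤
            (L' + α) * (B / 2 + (β / (L' + α)) / B) := by
          rw [hexp L hLα, hexp L' hL'α]
          nlinarith
        rcases h with ⟨hu, hg⟩ | ⟨hu, hg⟩ | ⟨hu, hg⟩ | ⟨hα0, hgu, hg1, hg2⟩ | ⟨hα0, hg, hu1, hu2⟩
        · exact Or.inl ⟨hu, le_trans hthr hg⟩
        · exact Or.inr (Or.inl ⟨hu, hg.trans (by linarith)⟩)
        · exact Or.inr (Or.inr (Or.inl ⟨hu, hg.trans hthr0⟩))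
        · exact Or.inr (Or.inr (Or.inr (Or.inl ⟨hα0, hgu,
            le_trans (mul_le_mul_of_nonneg_left hsq hα) hg1, hg2⟩)))
        · exact Or.inr (Or.inr (Or.inr (Or.inr ⟨hα0, hg, le_trans hsq hu1, hu2⟩)))
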